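/- Let O be a complete discrete valuation ring with uniformizer ϖ and fraction field K, let V be a K-vector space with an action of a group H, and let V° and V◇ be two H-invariant O-lattices in V (O-submodules spanning V over K) with V° ⊆ V◇, such that V°/ϖV° has finite length as an O/ϖ[H]-module and both lattices are ϖ-adically separated. If the quotient V◇/V° is of bounded exponent as an O-module, say ϖ^n(V◇/V°) = 0, then ϖ^n V◇ ⊆ V° ⊆ V◇, the quotients V°/ϖV° and V◇/ϖV◇ have the same finite length, and their semisimplifications as O/ϖ[H]-modules are isomorphic. -/

import Mathlib

/-- A submodule invariant under the action of `H`. -/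
def SubInvariant (H : Type*) [Monoid H] {R V : Type*} [CommRing R] [AddCommGroup V]
    [Module R V] [DistribMulAction H V] (W : Submodule R V) : Prop :=
  ∀ (h : H), ∀ x ∈ W, h • x ∈ W

/-- A composition chain `Wbot = C 0 < C 1 < ⋯ < C N = Wtop` of `H`-invariant
`R`-submodules, each step of which is simple (admits no `H`-invariant submodule strictly
in between). -/
def IsInvariantCompChain (H : Type*) [Monoid H] {R V : Type*} [CommRing R] [AddCommGroup V]
    [Module R V] [DistribMulAction H V]
    (Wbot Wtop : Submodule R V) (N : ℕ) (C : ℕ → Submodule R V) : Prop :=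
  C 0 = Wbot ∧ C N = Wtop ∧ (∀ i ≤ N, SubInvariant H (C i)) ∧
    ∀ i < N, C i < C (i + 1) ∧
      ∀ T : Submodule R V, SubInvariant H T → C i ≤ T → T ≤ C (i + 1) →
        T = C i ∨ T = C (i + 1)

/-- An `H`-equivariant `R`-linear isomorphism between the subquotients `W₁'/W₁` and
`W₂'/W₂` (equivariance is expressed via compatible lifts, the `H`-action descending to the
subquotients by the invariance hypotheses). -/
def FactorHIso (H : Type*) [Monoid H] {R V : Type*} [CommRing R] [AddCommGroup V]
    [Module R V] [DistribMulAction H V]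
    (W₁ W₁' W₂ W₂' : Submodule R V)
    (h₁ : ∀ (h : H), ∀ x ∈ W₁', h • x ∈ W₁')
    (h₂ : ∀ (h : H), ∀ x ∈ W₂', h • x ∈ W₂') : Prop :=
  ∃ f : (↥W₁' ⧸ (W₁.comap W₁'.subtype)) ≃ₗ[R] (↥W₂' ⧸ (W₂.comap W₂'.subtype)),
    ∀ (h : H) (x : ↥W₁') (y : ↥W₂'),
      f (Submodule.Quotient.mk x) = Submodule.Quotient.mk y →
      f (Submodule.Quotient.mk ⟨h • (x : V), h₁ h (x : V) x.2⟩)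
        = Submodule.Quotient.mk ⟨h • (y : V), h₂ h (y : V) y.2⟩


open Pointwise

section SEqv

variable {S : Type*} [Ring S] {M : Type*} [AddCommGroup M] [Module S M]

/-- Isomorphism of subquotients. -/
def QIso (X Y : Submodule S M × Submodule S M) : Prop :=
  Nonempty ((X.2 ⧸ X.1.comap X.2.subtype) ≃ₗ[S] Y.2 ⧸ Y.1.comap Y.2.subtype)

lemma QIso.refl' (X : Submodule S M × Submodule S M) : QIso X X := ⟨LinearEquiv.refl _ _⟩

lemma QIso.symm' {X Y : Submodule S M × Submodule S M} (h : QIso X Y) : QIso Y X :=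
  ⟨h.some.symm⟩

lemma QIso.trans' {X Y Z : Submodule S M × Submodule S M} (h : QIso X Y) (h' : QIso Y Z) :
    QIso X Z :=
  ⟨h.some.trans h'.some⟩

/-- Equivalence of composition series up to isomorphism of factors. -/
def SEquiv (s t : CompositionSeries (Submodule S M)) : Prop :=
  ∃ f : Fin s.length ≃ Fin t.length, ∀ i : Fin s.length,
    QIso (s (Fin.castSucc i), s i.succ) (t (Fin.castSucc (f i)), t (Fin.succ (f i)))

lemma SEquiv.refl (s : CompositionSeries (Submodule S M)) : SEquiv s s :=
  ⟨Equiv.refl _, fun _ => QIso.refl' _⟩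

lemma SEquiv.trans {s t u : CompositionSeries (Submodule S M)} (h₁ : SEquiv s t)
    (h₂ : SEquiv t u) : SEquiv s u :=
  ⟨h₁.choose.trans h₂.choose,
    fun i => QIso.trans' (h₁.choose_spec i) (h₂.choose_spec (h₁.choose i))⟩

lemma SEquiv.length_eq {s t : CompositionSeries (Submodule S M)} (h : SEquiv s t) :
    s.length = t.length := by
  have := Fintype.card_congr h.choose
  simpa using this

lemma SEquiv.of_equivalent {s t : CompositionSeries (Submodule S M)}
    (h : CompositionSeries.Equivalent s t) : SEquiv s t :=
  ⟨h.choose, fun i => ⟨(h.choose_spec i).linearEquiv⟩⟩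

end SEqv

section Setup

variable (R : Type*) [CommRing R] (V : Type*) [AddCommGroup V] [Module R V]
  (H : Type*) [Group H] [DistribMulAction H V] [SMulCommClass R H V]

noncomputable def modA : Module (MonoidAlgebra R H) V :=
  letI : SMulCommClass H R V := SMulCommClass.symm R H V
  Module.compHom V (Representation.asAlgebraHom (Representation.ofDistribMulAction R H V)).toRingHom

attribute [local instance] modA

variable {R V H}

lemma modA_single_smul (h : H) (r : R) (v : V) :
    (MonoidAlgebra.single h r : MonoidAlgebra R H) • v = r • h • v := by
  letI : SMulCommClass H R V := SMulCommClass.symm R H V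
  show (Representation.asAlgebraHom (Representation.ofDistribMulAction R H V)
    (MonoidAlgebra.single h r)) v = r • h • v
  rw [Representation.asAlgebraHom_single]
  rfl

lemma modA_of_smul (h : H) (v : V) :
    (MonoidAlgebra.of R H h) • v = h • v := by
  show (MonoidAlgebra.single h (1:R) : MonoidAlgebra R H) • v = h • v
  rw [modA_single_smul, one_smul]

lemma modA_algebraMap_smul (r : R) (v : V) :
    (algebraMap R (MonoidAlgebra R H) r) • v = r • v := by
  show (MonoidAlgebra.single (1:H) r : MonoidAlgebra R H) • v = r • v
  rw [modA_single_smul, one_smul]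

lemma modA_smul_def (a : MonoidAlgebra R H) (v : V) :
    a • v = a.coeff.sum fun h r => r • h • v := by
  letI : SMulCommClass H R V := SMulCommClass.symm R H V
  show (Representation.asAlgebraHom (Representation.ofDistribMulAction R H V) a) v
    = a.coeff.sum fun h r => r • h • v
  rw [Representation.asAlgebraHom_def, MonoidAlgebra.lift_apply]
  simp only [Finsupp.sum, LinearMap.coe_sum, Finset.sum_apply, LinearMap.smul_apply]
  rfl


variable (H) in
/-- The `MonoidAlgebra R H`-submodule attached to an invariant `R`-submodule. -/
noncomputable def toA (W : Submodule R V) (hW : SubInvariant H W) :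
    Submodule (MonoidAlgebra R H) V where
  carrier := W
  add_mem' := fun ha hb => W.add_mem ha hb
  zero_mem' := W.zero_mem
  smul_mem' := by
    intro a x hx
    rw [modA_smul_def]
    rw [Finsupp.sum]
    exact Submodule.sum_mem W (fun h _ => W.smul_mem _ (hW h x hx))

variable (H) in
/-- The invariant `R`-submodule attached to a `MonoidAlgebra R H`-submodule. -/
noncomputable def ofA (W : Submodule (MonoidAlgebra R H) V) : Submodule R V where
  carrier := W
  add_mem' := fun ha hb => W.add_mem ha hb
  zero_mem' := W.zero_mem
  smul_mem' := by
    intro r x hx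
    have := W.smul_mem (algebraMap R (MonoidAlgebra R H) r) hx
    rwa [modA_algebraMap_smul] at this

@[simp] lemma mem_toA {W : Submodule R V} {hW : SubInvariant H W} {x : V} :
    x ∈ toA H W hW ↔ x ∈ W := Iff.rfl

@[simp] lemma mem_ofA {W : Submodule (MonoidAlgebra R H) V} {x : V} :
    x ∈ ofA H W ↔ x ∈ W := Iff.rfl

lemma ofA_invariant (W : Submodule (MonoidAlgebra R H) V) : SubInvariant H (ofA H W) := by
  intro h x hx
  have := W.smul_mem (MonoidAlgebra.of R H h) hx
  rwa [modA_of_smul] at this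

@[simp] lemma ofA_toA (W : Submodule R V) (hW : SubInvariant H W) : ofA H (toA H W hW) = W := by
  ext x; rfl

@[simp] lemma toA_ofA (W : Submodule (MonoidAlgebra R H) V) (hW : SubInvariant H (ofA H W)) :
    toA H (ofA H W) hW = W := by
  ext x; rfl

lemma toA_le_toA {W W' : Submodule R V} {hW : SubInvariant H W} {hW' : SubInvariant H W'} :
    toA H W hW ≤ toA H W' hW' ↔ W ≤ W' := Iff.rfl

lemma toA_lt_toA {W W' : Submodule R V} {hW : SubInvariant H W} {hW' : SubInvariant H W'} :
    toA H W hW < toA H W' hW' ↔ W < W' := by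
  rw [lt_iff_le_not_ge, lt_iff_le_not_ge]; exact Iff.rfl

lemma ofA_le_ofA {W W' : Submodule (MonoidAlgebra R H) V} :
    ofA H W ≤ ofA H W' ↔ W ≤ W' := Iff.rfl

lemma toA_inj {W W' : Submodule R V} {hW : SubInvariant H W} {hW' : SubInvariant H W'} :
    toA H W hW = toA H W' hW' ↔ W = W' := by
  constructor <;> intro e <;> ext x <;> exact SetLike.ext_iff.1 e x

/-- Covering in the `MonoidAlgebra` submodule lattice matches the "maximal invariant" condition. -/
lemma toA_covBy {W W' : Submodule R V} {hW : SubInvariant H W} {hW' : SubInvariant H W'}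
    (hlt : W < W')
    (hmax : ∀ T : Submodule R V, SubInvariant H T → W ≤ T → T ≤ W' → T = W ∨ T = W') :
    toA H W hW ⋖ toA H W' hW' := by
  refine ⟨toA_lt_toA.2 hlt, ?_⟩
  intro Z h1 h2
  rcases hmax (ofA H Z) (ofA_invariant Z) h1.le h2.le with e | e
  · exact h1.ne' (by ext x; exact SetLike.ext_iff.1 e x)
  · exact h2.ne (by ext x; exact SetLike.ext_iff.1 e x)

lemma covBy_toA_imp {W W' : Submodule R V} {hW : SubInvariant H W} {hW' : SubInvariant H W'}
    (hcov : toA H W hW ⋖ toA H W' hW') :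
    W < W' ∧ ∀ T : Submodule R V, SubInvariant H T → W ≤ T → T ≤ W' → T = W ∨ T = W' := by
  refine ⟨toA_lt_toA.1 hcov.1, ?_⟩
  intro T hT h1 h2
  by_contra hc
  push_neg at hc
  exact hcov.2 (show toA H W hW < toA H T hT from toA_lt_toA.2 (lt_of_le_of_ne h1 (Ne.symm hc.1)))
    (show toA H T hT < toA H W' hW' from toA_lt_toA.2 (lt_of_le_of_ne h2 hc.2))

variable (R V H) in
noncomputable def towerA : IsScalarTower R (MonoidAlgebra R H) V :=
  ⟨fun r a v => by
    rw [Algebra.smul_def, mul_smul, modA_algebraMap_smul]⟩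

attribute [local instance] towerA

/-- Scalar multiplication by `ϖ` as a `MonoidAlgebra R H`-linear endomorphism. -/
noncomputable def muA (ϖ : R) : V →ₗ[MonoidAlgebra R H] V where
  toFun v := ϖ • v
  map_add' := smul_add ϖ
  map_smul' a v := by
    simp only [RingHom.id_apply]
    calc ϖ • a • v = (algebraMap R (MonoidAlgebra R H) ϖ) • a • v :=
          (modA_algebraMap_smul ϖ _).symm
      _ = ((algebraMap R (MonoidAlgebra R H) ϖ) * a) • v := (mul_smul _ _ _).symm
      _ = (a * algebraMap R (MonoidAlgebra R H) ϖ) • v := by rw [Algebra.commutes]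
      _ = a • (algebraMap R (MonoidAlgebra R H) ϖ) • v := mul_smul _ _ _
      _ = a • ϖ • v := by rw [modA_algebraMap_smul]

lemma muA_apply (ϖ : R) (v : V) : muA (H := H) ϖ v = ϖ • v := rfl

lemma muA_pow_apply (ϖ : R) (n : ℕ) (v : V) : ((muA (H := H) ϖ) ^ n) v = ϖ ^ n • v := by
  induction n with
  | zero => simp
  | succ n ih =>
    rw [pow_succ', Module.End.mul_apply, ih, muA_apply, ← mul_smul, ← pow_succ']

lemma mem_span_smul {ϖ : R} {W : Submodule R V} {x : V} :
    x ∈ (Ideal.span {ϖ} : Ideal R) • W ↔ ∃ y ∈ W, ϖ • y = x := by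
  rw [Submodule.ideal_span_singleton_smul]
  constructor
  · intro hx
    obtain ⟨y, hy, hyx⟩ := Set.mem_smul_set.1 hx
    exact ⟨y, hy, hyx⟩
  · rintro ⟨y, hy, rfl⟩
    exact Submodule.smul_mem_pointwise_smul y ϖ W hy

lemma span_smul_invariant (ϖ : R) {W : Submodule R V} (hW : SubInvariant H W) :
    SubInvariant H ((Ideal.span {ϖ} : Ideal R) • W) := by
  intro h x hx
  rw [mem_span_smul] at hx ⊢
  obtain ⟨y, hy, rfl⟩ := hx
  exact ⟨h • y, hW h y hy, smul_comm ϖ h y⟩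

lemma toA_map_muA (ϖ : R) {W : Submodule R V} (hW : SubInvariant H W) :
    (toA H W hW).map (muA ϖ) = toA H ((Ideal.span {ϖ} : Ideal R) • W)
      (span_smul_invariant ϖ hW) := by
  ext x
  rw [mem_toA, mem_span_smul]
  constructor
  · rintro ⟨y, hy, rfl⟩; exact ⟨y, hy, rfl⟩
  · rintro ⟨y, hy, rfl⟩; exact ⟨y, hy, rfl⟩

/-- Comparison between the `R`-subquotient and the `MonoidAlgebra`-subquotient. -/
noncomputable def quotCompare {W W' : Submodule R V} (hW : SubInvariant H W)
    (hW' : SubInvariant H W') (hle : W ≤ W') :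
    (↥W' ⧸ (W.comap W'.subtype)) ≃ₗ[R]
      (↥(toA H W' hW') ⧸ ((toA H W hW).comap (toA H W' hW').subtype)) := by
  let incl : ↥W' →ₗ[R] ↥(toA H W' hW') :=
    { toFun := fun x => ⟨x.1, x.2⟩
      map_add' := fun _ _ => rfl
      map_smul' := fun _ _ => rfl }
  let φ : ↥W' →ₗ[R] (↥(toA H W' hW') ⧸ ((toA H W hW).comap (toA H W' hW').subtype)) :=
    ((((toA H W hW).comap (toA H W' hW').subtype).mkQ).restrictScalars R).comp incl
  have hker : W.comap W'.subtype ≤ LinearMap.ker φ := by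
    intro x hx
    rw [LinearMap.mem_ker]
    show Submodule.Quotient.mk (⟨x.1, x.2⟩ : ↥(toA H W' hW')) = 0
    rw [Submodule.Quotient.mk_eq_zero]
    exact hx
  refine LinearEquiv.ofBijective (Submodule.liftQ _ φ hker) ⟨?_, ?_⟩
  · intro z₁ z₂ hz
    obtain ⟨x₁, rfl⟩ := Submodule.Quotient.mk_surjective _ z₁
    obtain ⟨x₂, rfl⟩ := Submodule.Quotient.mk_surjective _ z₂
    rw [Submodule.liftQ_apply, Submodule.liftQ_apply] at hz
    have : Submodule.Quotient.mk (p := (toA H W hW).comap (toA H W' hW').subtype)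
        (⟨x₁.1, x₁.2⟩ : ↥(toA H W' hW'))
        = Submodule.Quotient.mk (⟨x₂.1, x₂.2⟩ : ↥(toA H W' hW')) := hz
    rw [Submodule.Quotient.eq] at this ⊢
    exact this
  · intro z
    obtain ⟨⟨x, hx⟩, rfl⟩ := Submodule.Quotient.mk_surjective _ z
    exact ⟨Submodule.Quotient.mk (⟨x, hx⟩ : ↥W'), rfl⟩

lemma quotCompare_mk {W W' : Submodule R V} (hW : SubInvariant H W)
    (hW' : SubInvariant H W') (hle : W ≤ W') (x : ↥W') :
    quotCompare hW hW' hle (Submodule.Quotient.mk x)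
      = Submodule.Quotient.mk ⟨x.1, x.2⟩ := rfl

lemma factorHIso_of_iso {W₁ W₁' W₂ W₂' : Submodule R V}
    (h₁ : SubInvariant H W₁) (h₁' : SubInvariant H W₁')
    (h₂ : SubInvariant H W₂) (h₂' : SubInvariant H W₂')
    (hle₁ : W₁ ≤ W₁') (hle₂ : W₂ ≤ W₂')
    (hiso : QIso (S := MonoidAlgebra R H) (M := V)
      (toA H W₁ h₁, toA H W₁' h₁') (toA H W₂ h₂, toA H W₂' h₂')) :
    FactorHIso H W₁ W₁' W₂ W₂' h₁' h₂' := by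
  obtain ⟨g⟩ := hiso
  refine ⟨(quotCompare h₁ h₁' hle₁).trans
    ((g.restrictScalars R).trans (quotCompare h₂ h₂' hle₂).symm), ?_⟩
  intro h x y hxy
  simp only [LinearEquiv.trans_apply, quotCompare_mk] at hxy ⊢
  rw [LinearEquiv.symm_apply_eq, quotCompare_mk] at hxy ⊢
  have key : ∀ (W : Submodule R V) (hW : SubInvariant H W) (x : V) (hx : x ∈ W),
      (⟨h • x, hW h x hx⟩ : ↥(toA H W hW))
        = (MonoidAlgebra.of R H h) • (⟨x, hx⟩ : ↥(toA H W hW)) :=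
    fun W hW x hx => Subtype.ext (by simp [Submodule.coe_smul, MonoidAlgebra.of_apply, modA_single_smul])
  rw [LinearEquiv.restrictScalars_apply] at hxy
  rw [key _ h₁', key _ h₂', Submodule.Quotient.mk_smul, Submodule.Quotient.mk_smul,
    LinearEquiv.restrictScalars_apply, map_smul, hxy]
  exact x.2

lemma toA_congr {W W' : Submodule R V} (hW : SubInvariant H W) (hW' : SubInvariant H W')
    (e : W = W') : toA H W hW = toA H W' hW' := by subst e; rfl

lemma ofA_lt {P Q : Submodule (MonoidAlgebra R H) V} (h : P < Q) : ofA H P < ofA H Q := by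
  rw [lt_iff_le_not_ge] at h ⊢
  exact h

lemma covBy_ofA {P Q : Submodule (MonoidAlgebra R H) V} (hcov : P ⋖ Q) :
    ofA H P < ofA H Q ∧ ∀ T : Submodule R V, SubInvariant H T →
      ofA H P ≤ T → T ≤ ofA H Q → T = ofA H P ∨ T = ofA H Q := by
  refine ⟨ofA_lt hcov.1, ?_⟩
  intro T hT h1 h2
  have h1' : P ≤ toA H T hT := h1
  have h2' : toA H T hT ≤ Q := h2
  by_cases e : toA H T hT = P
  · left; rw [← ofA_toA T hT]; exact congrArg (ofA H) e
  · right
    have hlt : P < toA H T hT := lt_of_le_of_ne h1' (Ne.symm e)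
    have hQ : toA H T hT = Q := le_antisymm h2' (by
      by_contra hc
      exact hcov.2 hlt (lt_of_le_of_ne h2' (fun ee => hc (le_of_eq ee.symm))))
    rw [← ofA_toA T hT]; exact congrArg (ofA H) hQ

/-- Build a composition series over the monoid algebra from an invariant chain. -/
lemma chainToSeries {P Q : Submodule R V} (hP : SubInvariant H P) (hQ : SubInvariant H Q)
    {N : ℕ} {C : ℕ → Submodule R V} (hC : IsInvariantCompChain H P Q N C) :
    ∃ s : CompositionSeries (Submodule (MonoidAlgebra R H) V),
      s.head = toA H P hP ∧ s.last = toA H Q hQ := by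
  refine ⟨⟨N, fun i => toA H (C i.1) (hC.2.2.1 i.1 (Nat.lt_succ_iff.mp i.isLt)), fun i => ?_⟩,
    ?_, ?_⟩
  · exact toA_covBy (hC.2.2.2 i.1 i.isLt).1 (hC.2.2.2 i.1 i.isLt).2
  · exact toA_congr (hC.2.2.1 0 (Nat.zero_le N)) hP hC.1
  · exact toA_congr (hC.2.2.1 N le_rfl) hQ hC.2.1

/-- Extract an invariant chain from a composition series over the monoid algebra. -/
lemma seriesToChain {P Q : Submodule R V} (hP : SubInvariant H P) (hQ : SubInvariant H Q)
    (s : CompositionSeries (Submodule (MonoidAlgebra R H) V))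
    (hh : s.head = toA H P hP) (hl : s.last = toA H Q hQ) :
    IsInvariantCompChain H P Q s.length
      (fun i => ofA H (s ⟨min i s.length, Nat.lt_succ_of_le (min_le_right _ _)⟩)) := by
  refine ⟨?_, ?_, fun i _ => ofA_invariant _, fun i hi => ?_⟩
  · show ofA H (s ⟨min 0 s.length, Nat.lt_succ_of_le (min_le_right _ _)⟩) = P
    have e0 : s (⟨min 0 s.length, Nat.lt_succ_of_le (min_le_right _ _)⟩ : Fin (s.length + 1))
        = s.head := congrArg s (Fin.ext (by simp))
    rw [e0, hh, ofA_toA]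
  · show ofA H (s ⟨min s.length s.length, Nat.lt_succ_of_le (min_le_right _ _)⟩) = Q
    have e0 : s (⟨min s.length s.length, Nat.lt_succ_of_le (min_le_right _ _)⟩
        : Fin (s.length + 1)) = s.last := congrArg s (Fin.ext (by simp [RelSeries.last]))
    rw [e0, hl, ofA_toA]
  · constructor
    · show ofA H (s ⟨min i s.length, Nat.lt_succ_of_le (min_le_right _ _)⟩)
        < ofA H (s ⟨min (i+1) s.length, Nat.lt_succ_of_le (min_le_right _ _)⟩)
      have e1 : s (⟨min i s.length, Nat.lt_succ_of_le (min_le_right _ _)⟩ : Fin (s.length + 1))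
          = s (Fin.castSucc ⟨i, hi⟩) := congrArg s (Fin.ext (by simp [min_eq_left (le_of_lt hi)]))
      have e2 : s (⟨min (i+1) s.length, Nat.lt_succ_of_le (min_le_right _ _)⟩
          : Fin (s.length + 1)) = s (Fin.succ ⟨i, hi⟩) :=
        congrArg s (Fin.ext (by simp [min_eq_left (Nat.succ_le_of_lt hi)]))
      rw [e1, e2]
      exact (covBy_ofA (s.step ⟨i, hi⟩)).1
    · show ∀ T : Submodule R V, SubInvariant H T →
        ofA H (s ⟨min i s.length, Nat.lt_succ_of_le (min_le_right _ _)⟩) ≤ T →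
        T ≤ ofA H (s ⟨min (i+1) s.length, Nat.lt_succ_of_le (min_le_right _ _)⟩) →
        T = ofA H (s ⟨min i s.length, Nat.lt_succ_of_le (min_le_right _ _)⟩)
          ∨ T = ofA H (s ⟨min (i+1) s.length, Nat.lt_succ_of_le (min_le_right _ _)⟩)
      have e1 : s (⟨min i s.length, Nat.lt_succ_of_le (min_le_right _ _)⟩ : Fin (s.length + 1))
          = s (Fin.castSucc ⟨i, hi⟩) := congrArg s (Fin.ext (by simp [min_eq_left (le_of_lt hi)]))
      have e2 : s (⟨min (i+1) s.length, Nat.lt_succ_of_le (min_le_right _ _)⟩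
          : Fin (s.length + 1)) = s (Fin.succ ⟨i, hi⟩) :=
        congrArg s (Fin.ext (by simp [min_eq_left (Nat.succ_le_of_lt hi)]))
      rw [e1, e2]
      exact (covBy_ofA (s.step ⟨i, hi⟩)).2


end Setup

section MapLemmas

variable {S : Type*} [Ring S] {M : Type*} [AddCommGroup M] [Module S M]
  (f : M →ₗ[S] M)

lemma map_lt_map_iff_of_injective (hf : Function.Injective f) {p q : Submodule S M} :
    p.map f < q.map f ↔ p < q := by
  rw [lt_iff_le_not_ge, lt_iff_le_not_ge, Submodule.map_le_map_iff_of_injective hf,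
    Submodule.map_le_map_iff_of_injective hf]

lemma covBy_map_of_covBy (hf : Function.Injective f) {p q : Submodule S M} (h : p ⋖ q) :
    p.map f ⋖ q.map f := by
  refine ⟨(map_lt_map_iff_of_injective f hf).2 h.1, ?_⟩
  intro Z h1 h2
  have hZr : Z ≤ LinearMap.range f := by
    refine le_trans h2.le ?_
    rintro x ⟨y, -, rfl⟩
    exact ⟨y, rfl⟩
  have hmapZ : Submodule.map f (Z.comap f ⊓ q) = Z := by
    rw [Submodule.map_inf f hf, Submodule.map_comap_eq, inf_eq_right.2 hZr]
    exact inf_eq_left.2 h2.le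
  have e1 : p < Z.comap f ⊓ q := by
    rw [← map_lt_map_iff_of_injective f hf, hmapZ]; exact h1
  have e2 : Z.comap f ⊓ q < q := by
    rw [← map_lt_map_iff_of_injective f hf, hmapZ]; exact h2
  exact h.2 e1 e2

lemma covBy_of_covBy_map (hf : Function.Injective f) {p q : Submodule S M}
    (h : p.map f ⋖ q.map f) : p ⋖ q := by
  refine ⟨(map_lt_map_iff_of_injective f hf).1 h.1, ?_⟩
  intro Z h1 h2
  exact h.2 ((map_lt_map_iff_of_injective f hf).2 h1) ((map_lt_map_iff_of_injective f hf).2 h2)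

lemma iso_map (hf : Function.Injective f) {p q : Submodule S M} (hpq : p ≤ q) :
    QIso (p, q) (p.map f, q.map f) := by
  refine ⟨Submodule.Quotient.equiv (p.comap q.subtype) ((p.map f).comap (q.map f).subtype)
    (Submodule.equivMapOfInjective f hf q) ?_⟩
  ext ⟨x, hx⟩
  simp only [Submodule.mem_map, Submodule.mem_comap, Submodule.subtype_apply]
  constructor
  · rintro ⟨⟨y, hy⟩, hy', he⟩
    have hfy : f y = x := by
      have := congrArg Subtype.val he
      simpa [Submodule.coe_equivMapOfInjective_apply] using this
    exact ⟨y, hy', hfy⟩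
  · rintro ⟨y, hy, hyx⟩
    refine ⟨⟨y, hpq hy⟩, hy, ?_⟩
    apply Subtype.ext
    simpa [Submodule.coe_equivMapOfInjective_apply] using hyx

end MapLemmas

section Interval

variable {S : Type*} [Ring S] {M : Type*} [AddCommGroup M] [Module S M]

/-- Submodules of a subquotient `Q/P` correspond to submodules between `P` and `Q`. -/
noncomputable def iccIso (P Q : Submodule S M) (hPQ : P ≤ Q) :
    Submodule S (↥Q ⧸ P.comap Q.subtype) ≃o Set.Icc P Q :=
  (Submodule.comapMkQRelIso (P.comap Q.subtype)).trans
  { toFun := fun W => ⟨(W.1).map Q.subtype, by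
      constructor
      · calc P = (P.comap Q.subtype).map Q.subtype := by
              rw [Submodule.map_comap_subtype]; exact (inf_eq_right.2 hPQ).symm
          _ ≤ (W.1).map Q.subtype := Submodule.map_mono W.2
      · exact (Submodule.map_mono le_top).trans_eq
          (by rw [Submodule.map_top, Submodule.range_subtype])⟩
    invFun := fun T => ⟨(T.1).comap Q.subtype, fun x hx => T.2.1 hx⟩
    left_inv := fun W => Subtype.ext
      (Submodule.comap_map_eq_of_injective (Submodule.injective_subtype Q) W.1)
    right_inv := fun T => Subtype.ext (by
      show Submodule.map Q.subtype (Submodule.comap Q.subtype T.1) = T.1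
      rw [Submodule.map_comap_subtype]; exact inf_eq_right.2 T.2.2)
    map_rel_iff' := @fun W W' => by
      simp only [Equiv.coe_fn_mk, ← Subtype.coe_le_coe]
      exact Submodule.map_le_map_iff_of_injective (Submodule.injective_subtype Q) _ _ }

lemma iccIso_bot (P Q : Submodule S M) (hPQ : P ≤ Q) :
    (iccIso P Q hPQ ⊥ : Submodule S M) = P := by
  show (((Submodule.comapMkQRelIso (P.comap Q.subtype)) ⊥).1.map Q.subtype : Submodule S M) = P
  have : ((Submodule.comapMkQRelIso (P.comap Q.subtype)) ⊥).1 = P.comap Q.subtype := by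
    show Submodule.comap _ ⊥ = _
    rw [Submodule.comap_bot, Submodule.ker_mkQ]
  rw [this, Submodule.map_comap_subtype]; exact inf_eq_right.2 hPQ

lemma iccIso_top (P Q : Submodule S M) (hPQ : P ≤ Q) :
    (iccIso P Q hPQ ⊤ : Submodule S M) = Q := by
  show (((Submodule.comapMkQRelIso (P.comap Q.subtype)) ⊤).1.map Q.subtype : Submodule S M) = Q
  have : ((Submodule.comapMkQRelIso (P.comap Q.subtype)) ⊤).1 = ⊤ := by
    show Submodule.comap _ ⊤ = ⊤
    rw [Submodule.comap_top]
  rw [this, Submodule.map_top, Submodule.range_subtype]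

lemma icc_covBy_of_covBy {P Q : Submodule S M} {a b : Set.Icc P Q}
    (h : (a : Submodule S M) ⋖ (b : Submodule S M)) : a ⋖ b := by
  refine ⟨Subtype.coe_lt_coe.1 h.1, ?_⟩
  intro z h1 h2
  exact h.2 (Subtype.coe_lt_coe.2 h1) (Subtype.coe_lt_coe.2 h2)

lemma covBy_of_icc_covBy {P Q : Submodule S M} {a b : Set.Icc P Q} (hab : a ⋖ b) :
    (a : Submodule S M) ⋖ (b : Submodule S M) := by
  refine ⟨Subtype.coe_lt_coe.2 hab.1, ?_⟩
  intro Z h1 h2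
  have hZ : Z ∈ Set.Icc P Q := ⟨le_trans a.2.1 h1.le, le_trans h2.le b.2.2⟩
  exact hab.2 (c := ⟨Z, hZ⟩) (Subtype.coe_lt_coe.1 h1) (Subtype.coe_lt_coe.1 h2)

/-- From a composition series between `P` and `Q`, the interval `[P,Q]` is
well-founded in both directions. -/
lemma wf_of_compSeries {P Q : Submodule S M} (hPQ : P ≤ Q)
    (s : CompositionSeries (Submodule S M)) (hh : s.head = P) (hl : s.last = Q) :
    WellFoundedLT ↥(Set.Icc P Q) ∧ WellFoundedGT ↥(Set.Icc P Q) := by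
  set N := ↥Q ⧸ P.comap Q.subtype with hN
  let e := iccIso P Q hPQ
  have hmem : ∀ i : Fin (s.length + 1), s i ∈ Set.Icc P Q :=
    fun i => ⟨hh ▸ s.head_le i, hl ▸ s.le_last i⟩
  let t : CompositionSeries (Submodule S N) :=
    { length := s.length
      toFun := fun i => e.symm ⟨s i, hmem i⟩
      step := fun i => by
        show e.symm _ ⋖ e.symm _
        rw [apply_covBy_apply_iff]
        exact icc_covBy_of_covBy (s.step i) }
  have htb : t.head = ⊥ := by
    show e.symm ⟨s 0, _⟩ = ⊥
    rw [OrderIso.symm_apply_eq]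
    exact Subtype.ext (by rw [iccIso_bot]; exact (congrArg _ rfl).trans hh)
  have htt : t.last = ⊤ := by
    show e.symm ⟨s (Fin.last _), _⟩ = ⊤
    rw [OrderIso.symm_apply_eq]
    exact Subtype.ext (by rw [iccIso_top]; exact hl)
  have hfl : IsFiniteLength S N := isFiniteLength_of_exists_compositionSeries ⟨t, htb, htt⟩
  obtain ⟨hnoeth, hart⟩ := isFiniteLength_iff_isNoetherian_isArtinian.1 hfl
  have hlt : WellFoundedLT (Submodule S N) := inferInstance
  have hgt : WellFoundedGT (Submodule S N) := inferInstance
  constructor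
  · exact ⟨(e.symm.toRelIsoLT.toRelEmbedding).wellFounded hlt.wf⟩
  · exact ⟨(e.symm.dual.toRelIsoLT.toRelEmbedding).wellFounded hgt.wf⟩

lemma wf_icc_mono {P X Q : Submodule S M} (hPX : P ≤ X) (hXQ : X ≤ Q)
    (h : WellFoundedLT ↥(Set.Icc P Q) ∧ WellFoundedGT ↥(Set.Icc P Q)) :
    (WellFoundedLT ↥(Set.Icc P X) ∧ WellFoundedGT ↥(Set.Icc P X))
      ∧ (WellFoundedLT ↥(Set.Icc X Q) ∧ WellFoundedGT ↥(Set.Icc X Q)) := by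
  have h1 : Set.Icc P X ⊆ Set.Icc P Q := Set.Icc_subset_Icc le_rfl hXQ
  have h2 : Set.Icc X Q ⊆ Set.Icc P Q := Set.Icc_subset_Icc hPX le_rfl
  have key : ∀ (s : Set (Submodule S M)) (hs : s ⊆ Set.Icc P Q),
      (WellFoundedLT ↥s ∧ WellFoundedGT ↥s) := by
    intro s hs
    constructor
    · refine ⟨RelEmbedding.wellFounded
        (⟨⟨Set.inclusion hs, Set.inclusion_injective hs⟩, ?_⟩ :
          ((· < ·) : ↥s → ↥s → Prop) ↪r ((· < ·) : ↥(Set.Icc P Q) → _ → Prop)) h.1.wf⟩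
      intro a b
      exact Set.inclusion_lt_inclusion hs
    · refine ⟨RelEmbedding.wellFounded
        (⟨⟨Set.inclusion hs, Set.inclusion_injective hs⟩, ?_⟩ :
          ((· > ·) : ↥s → ↥s → Prop) ↪r ((· > ·) : ↥(Set.Icc P Q) → _ → Prop)) h.2.wf⟩
      intro a b
      exact Set.inclusion_lt_inclusion hs
  exact ⟨key _ h1, key _ h2⟩

/-- In a doubly well-founded interval there is a composition series joining the endpoints. -/
lemma compSeries_exists {P X : Submodule S M} (hPX : P ≤ X)
    (h : WellFoundedLT ↥(Set.Icc P X) ∧ WellFoundedGT ↥(Set.Icc P X)) :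
    ∃ s : CompositionSeries (Submodule S M), s.head = P ∧ s.last = X := by
  haveI := h.1
  haveI := h.2
  haveI : Nonempty ↥(Set.Icc P X) := ⟨⟨P, ⟨le_rfl, hPX⟩⟩⟩
  obtain ⟨a, ha0, n, han, hcov⟩ := exists_covBy_seq_of_wellFoundedLT_wellFoundedGT ↥(Set.Icc P X)
  have ha0' : (a 0 : Submodule S M) = P := by
    have h1 : (⟨P, ⟨le_rfl, hPX⟩⟩ : ↥(Set.Icc P X)) ≤ a 0 := (a 0).2.1
    exact le_antisymm (ha0 h1) (a 0).2.1
  have han' : (a n : Submodule S M) = X := by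
    have h1 : a n ≤ (⟨X, ⟨hPX, le_rfl⟩⟩ : ↥(Set.Icc P X)) := (a n).2.2
    exact le_antisymm (a n).2.2 (han h1)
  refine ⟨⟨n, fun i => (a (i : ℕ) : Submodule S M), fun i => ?_⟩, ?_, ?_⟩
  · exact covBy_of_icc_covBy (hcov (i : ℕ) i.isLt)
  · exact ha0'
  · exact han'

end Interval

section SmashComm

open JordanHolderLattice

variable {S : Type*} [Ring S] {M : Type*} [AddCommGroup M] [Module S M]

theorem equivalent_smash_comm {s₁ s₂ t₁ t₂ : CompositionSeries (Submodule S M)}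
    (hs : s₁.last = s₂.head) (ht : t₂.last = t₁.head)
    (h₁ : SEquiv s₁ t₁) (h₂ : SEquiv s₂ t₂) :
    SEquiv (RelSeries.smash s₁ s₂ hs) (RelSeries.smash t₂ t₁ ht) :=
  let e : Fin (s₁.length + s₂.length) ≃ Fin (t₂.length + t₁.length) :=
    calc
      Fin (s₁.length + s₂.length) ≃ (Fin s₁.length) ⊕ (Fin s₂.length) := finSumFinEquiv.symm
      _ ≃ (Fin t₁.length) ⊕ (Fin t₂.length) := Equiv.sumCongr h₁.choose h₂.choose
      _ ≃ (Fin t₂.length) ⊕ (Fin t₁.length) := Equiv.sumComm _ _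
      _ ≃ Fin (t₂.length + t₁.length) := finSumFinEquiv
  ⟨e, by
    intro i
    refine Fin.addCases ?_ ?_ i
    · intro i
      have he : e (Fin.castAdd s₂.length i) = Fin.natAdd t₂.length (h₁.choose i) := by simp [e]
      have key : QIso (RelSeries.smash s₁ s₂ hs (Fin.castAdd s₂.length i).castSucc,
          RelSeries.smash s₁ s₂ hs (Fin.castAdd s₂.length i).succ)
          (RelSeries.smash t₂ t₁ ht (Fin.natAdd t₂.length (h₁.choose i)).castSucc,
          RelSeries.smash t₂ t₁ ht (Fin.natAdd t₂.length (h₁.choose i)).succ) := by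
        rw [RelSeries.smash_castAdd, RelSeries.smash_succ_castAdd,
          RelSeries.smash_natAdd, RelSeries.smash_succ_natAdd]
        exact h₁.choose_spec i
      exact he ▸ key
    · intro i
      have he : e (Fin.natAdd s₁.length i) = Fin.castAdd t₁.length (h₂.choose i) := by simp [e]
      have key : QIso (RelSeries.smash s₁ s₂ hs (Fin.natAdd s₁.length i).castSucc,
          RelSeries.smash s₁ s₂ hs (Fin.natAdd s₁.length i).succ)
          (RelSeries.smash t₂ t₁ ht (Fin.castAdd t₁.length (h₂.choose i)).castSucc,
          RelSeries.smash t₂ t₁ ht (Fin.castAdd t₁.length (h₂.choose i)).succ) := by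
        rw [RelSeries.smash_natAdd, RelSeries.smash_succ_natAdd,
          RelSeries.smash_castAdd, RelSeries.smash_succ_castAdd]
        exact h₂.choose_spec i
      exact he ▸ key⟩

end SmashComm

section Devissage

open JordanHolderLattice

variable {S : Type*} [Ring S] {M : Type*} [AddCommGroup M] [Module S M]
  (mu : M →ₗ[S] M)

theorem step1 (hmu : Function.Injective mu) (hmuW : ∀ W : Submodule S M, W.map mu ≤ W)
    {U W₁ : Submodule S M} (hUW : U ≤ W₁) (h1 : W₁.map mu ≤ U)
    (su : CompositionSeries (Submodule S M)) (hsuh : su.head = U.map mu) (hsul : su.last = U) :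
    ∃ t : CompositionSeries (Submodule S M),
      t.head = W₁.map mu ∧ t.last = W₁ ∧ SEquiv su t := by
  have hmuU : U.map mu ≤ U := hmuW U
  have hmid1 : U.map mu ≤ W₁.map mu := Submodule.map_mono hUW
  have hWF := wf_of_compSeries hmuU su hsuh hsul
  obtain ⟨hWFa, hWFb⟩ := wf_icc_mono hmid1 h1 hWF
  obtain ⟨t₁, ht₁h, ht₁l⟩ := compSeries_exists hmid1 hWFa
  obtain ⟨t₂, ht₂h, ht₂l⟩ := compSeries_exists h1 hWFb
  -- every element of t₁ lies below `map mu W₁ ≤ range mu`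
  have ht₁range : ∀ i : Fin (t₁.length + 1), Submodule.map mu (Submodule.comap mu (t₁ i)) = t₁ i := by
    intro i
    apply Submodule.map_comap_eq_self
    refine le_trans (ht₁l ▸ t₁.le_last i) ?_
    rintro x ⟨y, -, rfl⟩
    exact ⟨y, rfl⟩
  let u : CompositionSeries (Submodule S M) :=
    { length := t₁.length
      toFun := fun i => Submodule.comap mu (t₁ i)
      step := fun i => by
        apply covBy_of_covBy_map mu hmu
        rw [ht₁range, ht₁range]
        exact t₁.step i }
  have huh : u.head = U := by
    show Submodule.comap mu (t₁.head) = U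
    rw [ht₁h]
    exact Submodule.comap_map_eq_of_injective hmu U
  have hul : u.last = W₁ := by
    show Submodule.comap mu (t₁.last) = W₁
    rw [ht₁l]
    exact Submodule.comap_map_eq_of_injective hmu W₁
  have hconn : t₂.last = u.head := by rw [ht₂l, huh]
  refine ⟨RelSeries.smash t₂ u hconn, ?_, ?_, ?_⟩
  · rw [RelSeries.head_smash]; exact ht₂h
  · rw [RelSeries.last_smash]; exact hul
  · -- su ≡ t₁.smash t₂ ≡ t₂.smash u
    have hconn' : t₁.last = t₂.head := by rw [ht₁l, ht₂h]
    have h1' : SEquiv su (RelSeries.smash t₁ t₂ hconn') :=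
      SEquiv.of_equivalent <| CompositionSeries.jordan_holder _ _
        (by rw [RelSeries.head_smash, ht₁h, hsuh]) (by rw [RelSeries.last_smash, ht₂l, hsul])
    have ht₁u : SEquiv t₁ u := by
      refine ⟨Equiv.refl _, fun i => ?_⟩
      have hle : Submodule.comap mu (t₁ (Fin.castSucc i)) ≤ Submodule.comap mu (t₁ (Fin.succ i)) :=
        Submodule.comap_mono (t₁.step i).1.le
      have := iso_map mu hmu hle
      rw [ht₁range, ht₁range] at this
      exact QIso.symm' this
    exact h1'.trans (equivalent_smash_comm hconn' hconn ht₁u (SEquiv.refl t₂))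

theorem devissage (hmu : Function.Injective mu) (hmuW : ∀ W : Submodule S M, W.map mu ≤ W)
    (n : ℕ) (W₀ W₁ : Submodule S M) (h01 : W₀ ≤ W₁)
    (hexp : W₁ ≤ Submodule.comap (mu ^ n) W₀)
    (hlen : ∃ s : CompositionSeries (Submodule S M), s.head = W₀.map mu ∧ s.last = W₀) :
    ∃ s t : CompositionSeries (Submodule S M),
      (s.head = W₀.map mu ∧ s.last = W₀) ∧ (t.head = W₁.map mu ∧ t.last = W₁) ∧
        SEquiv s t := by
  induction n generalizing W₀ W₁ with
  | zero =>
    obtain ⟨s, hs⟩ := hlen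
    have : W₁ = W₀ := le_antisymm (fun x hx => hexp hx) h01
    subst this
    exact ⟨s, s, hs, hs, SEquiv.refl s⟩
  | succ n ih =>
    set U := Submodule.comap (mu ^ n) W₀ ⊓ W₁ with hU
    have hW₀U : W₀ ≤ U := by
      refine le_inf ?_ h01
      intro x hx
      -- mu ^ n maps W₀ into W₀
      have : ∀ m : ℕ, ∀ y ∈ W₀, (mu ^ m) y ∈ W₀ := by
        intro m
        induction m with
        | zero => intro y hy; simpa using hy
        | succ m ihm =>
          intro y hy
          rw [pow_succ, Module.End.mul_apply]
          exact ihm _ (hmuW W₀ ⟨y, hy, rfl⟩)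
      exact this n x hx
    have hUW₁ : U ≤ W₁ := inf_le_right
    have hUexp : U ≤ Submodule.comap (mu ^ n) W₀ := inf_le_left
    obtain ⟨s, sU, hs, hsU, hequiv⟩ := ih W₀ U hW₀U hUexp hlen
    have hstep : W₁.map mu ≤ U := by
      rintro x ⟨y, hy, rfl⟩
      refine ⟨?_, hmuW W₁ ⟨y, hy, rfl⟩⟩
      show (mu ^ n) (mu y) ∈ W₀
      have := hexp hy
      rwa [Submodule.mem_comap, pow_succ, Module.End.mul_apply] at this
    obtain ⟨t, hth, htl, hequiv₂⟩ := step1 mu hmu hmuW hUW₁ hstep sU hsU.1 hsU.2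
    exact ⟨s, t, hs, ⟨hth, htl⟩, hequiv.trans hequiv₂⟩

end Devissage

/-- Let `R` be a complete discrete valuation ring with uniformizer `ϖ` and
fraction field `K`, let `V` be a `K`-vector space with a `K`-linear action of a group `H`,
and let `V₀ ⊆ V₁` be two `ϖ`-adically separated `H`-invariant `R`-lattices in `V` such that
`V₀/ϖV₀` has finite length as an `R/ϖ[H]`-module (it admits a finite composition chain of
invariant submodules).  If `V₁/V₀` is of bounded exponent, say killed by `ϖ^nn`, then
`ϖ^nn V₁ ⊆ V₀ ⊆ V₁`, the reductions `V₀/ϖV₀` and `V₁/ϖV₁` have the same finite length,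
and their semisimplifications are isomorphic: both admit composition chains of the same
length `N` whose simple factors match up, under some permutation, by `H`-equivariant
`R`-linear isomorphisms. -/
theorem lattice_reductions_have_isomorphic_semisimplifications
    (R : Type*) [CommRing R] [IsDomain R] [IsDiscreteValuationRing R]
    [IsAdicComplete (IsLocalRing.maximalIdeal R) R]
    (ϖ : R) (hϖ : Irreducible ϖ)
    (V : Type*) [AddCommGroup V] [Module R V] [Module (FractionRing R) V]
    [IsScalarTower R (FractionRing R) V]
    (H : Type*) [Group H] [DistribMulAction H V]
    [SMulCommClass R H V] [SMulCommClass (FractionRing R) H V]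
    (V₀ V₁ : Submodule R V)
    (hinv₀ : SubInvariant H V₀) (hinv₁ : SubInvariant H V₁)
    (hspan₀ : Submodule.span (FractionRing R) (V₀ : Set V) = ⊤)
    (hspan₁ : Submodule.span (FractionRing R) (V₁ : Set V) = ⊤)
    (hsep₀ : (⨅ m : ℕ, (Ideal.span {ϖ} ^ m) • V₀) = ⊥)
    (hsep₁ : (⨅ m : ℕ, (Ideal.span {ϖ} ^ m) • V₁) = ⊥)
    (hlen : ∃ (N : ℕ) (C : ℕ → Submodule R V),
      IsInvariantCompChain H ((Ideal.span {ϖ}) • V₀) V₀ N C)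
    (h01 : V₀ ≤ V₁) (nn : ℕ) (hexp : ∀ x ∈ V₁, ϖ ^ nn • x ∈ V₀) :
    (Ideal.span {ϖ ^ nn}) • V₁ ≤ V₀
    ∧ ∃ (N : ℕ) (C C' : ℕ → Submodule R V)
        (hC : IsInvariantCompChain H ((Ideal.span {ϖ}) • V₀) V₀ N C)
        (hC' : IsInvariantCompChain H ((Ideal.span {ϖ}) • V₁) V₁ N C')
        (perm : Equiv.Perm (Fin N)),
        ∀ i : Fin N,
          FactorHIso H (C (perm i)) (C ((perm i : ℕ) + 1)) (C' i) (C' ((i : ℕ) + 1))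
            (hC.2.2.1 ((perm i : ℕ) + 1) (Nat.succ_le_of_lt (perm i).isLt))
            (hC'.2.2.1 ((i : ℕ) + 1) (Nat.succ_le_of_lt i.isLt)) := by
  classical
  letI := modA R V H
  letI := towerA R V H
  have conj1 : (Ideal.span {ϖ ^ nn}) • V₁ ≤ V₀ := by
    refine Submodule.smul_le.2 (fun r hr x hx => ?_)
    obtain ⟨c, rfl⟩ := Ideal.mem_span_singleton'.1 hr
    rw [mul_smul]
    exact V₀.smul_mem c (hexp x hx)
  refine ⟨conj1, ?_⟩
  have hμinj : Function.Injective (muA (V := V) (H := H) ϖ) := by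
    intro a b hab
    have h1 : ϖ • a = ϖ • b := hab
    have h2 : (algebraMap R (FractionRing R) ϖ) • a = (algebraMap R (FractionRing R) ϖ) • b := by
      rw [algebraMap_smul, algebraMap_smul]; exact h1
    have hϖ0 : (algebraMap R (FractionRing R) ϖ) ≠ 0 := fun e =>
      hϖ.ne_zero (IsFractionRing.injective R (FractionRing R) (by rw [e, map_zero]))
    calc a = (algebraMap R (FractionRing R) ϖ)⁻¹ • ((algebraMap R (FractionRing R) ϖ) • a) :=
          (inv_smul_smul₀ hϖ0 a).symm
      _ = (algebraMap R (FractionRing R) ϖ)⁻¹ • ((algebraMap R (FractionRing R) ϖ) • b) := by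
          rw [h2]
      _ = b := inv_smul_smul₀ hϖ0 b
  have hμW : ∀ W : Submodule (MonoidAlgebra R H) V, W.map (muA ϖ) ≤ W := by
    rintro W x ⟨y, hy, rfl⟩
    have hy' : (muA (V := V) (H := H) ϖ) y = (algebraMap R (MonoidAlgebra R H) ϖ) • y :=
      (modA_algebraMap_smul ϖ y).symm
    rw [hy']
    exact W.smul_mem _ hy
  obtain ⟨N₀, C₀, hC₀⟩ := hlen
  obtain ⟨s₀, hs₀h, hs₀l⟩ := chainToSeries (span_smul_invariant ϖ hinv₀) hinv₀ hC₀
  have hs₀h' : s₀.head = (toA H V₀ hinv₀).map (muA ϖ) := by rw [hs₀h, toA_map_muA]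
  have hexp' : toA H V₁ hinv₁ ≤ Submodule.comap ((muA (V := V) (H := H) ϖ) ^ nn)
      (toA H V₀ hinv₀) := by
    intro x hx
    show ((muA (V := V) (H := H) ϖ) ^ nn) x ∈ V₀
    rw [muA_pow_apply]
    exact hexp x hx
  obtain ⟨s, t, ⟨hsh, hsl⟩, ⟨hth, htl⟩, hequiv⟩ :=
    devissage (muA ϖ) hμinj hμW nn (toA H V₀ hinv₀) (toA H V₁ hinv₁)
      (show toA H V₀ hinv₀ ≤ toA H V₁ hinv₁ from h01) hexp' ⟨s₀, hs₀h', hs₀l⟩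
  have hlen_eq : t.length = s.length := hequiv.length_eq.symm
  let t' : CompositionSeries (Submodule (MonoidAlgebra R H) V) :=
    ⟨s.length, fun i => t (Fin.cast (by rw [hlen_eq]) i),
      fun i => t.step (Fin.cast hlen_eq.symm i)⟩
  have ht'h : t'.head = toA H (Ideal.span {ϖ} • V₁) (span_smul_invariant ϖ hinv₁) := by
    have e0 : t'.head = t.head := congrArg t (Fin.ext rfl)
    rw [e0, hth, toA_map_muA]
  have ht'l : t'.last = toA H V₁ hinv₁ := by
    have : t'.last = t.last := congrArg t (Fin.ext hlen_eq.symm)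
    rw [this, htl]
  have hequiv' : SEquiv s t' := by
    refine hequiv.trans ⟨finCongr hlen_eq, fun i => ?_⟩
    have e1 : t' (Fin.castSucc (finCongr hlen_eq i)) = t (Fin.castSucc i) :=
      congrArg t (Fin.ext rfl)
    have e2 : t' (Fin.succ (finCongr hlen_eq i)) = t (Fin.succ i) :=
      congrArg t (Fin.ext rfl)
    rw [e1, e2]
    exact QIso.refl' _
  have hchainC := seriesToChain (span_smul_invariant ϖ hinv₀) hinv₀ s
    (by rw [hsh, toA_map_muA]) hsl
  have hchainC' := seriesToChain (span_smul_invariant ϖ hinv₁) hinv₁ t' ht'h ht'l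
  obtain ⟨e, he⟩ := hequiv'
  refine ⟨s.length, _, _, hchainC, hchainC', (e.symm : Fin s.length ≃ Fin s.length), fun i => ?_⟩
  set j : Fin s.length := (e.symm : Fin s.length ≃ Fin s.length) i with hjdef
  have hej : e j = (i : Fin t'.length) := e.apply_symm_apply _
  have hejv : ((e j : Fin t'.length) : ℕ) = (i : ℕ) := congrArg Fin.val hej
  have A1 : toA H (ofA H (s ⟨min (j : ℕ) s.length, Nat.lt_succ_of_le (min_le_right _ _)⟩))
      (ofA_invariant _) = s (Fin.castSucc j) := by
    rw [toA_ofA]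
    exact congrArg s (Fin.ext (by simp [min_eq_left (le_of_lt j.isLt)]))
  have A2 : toA H (ofA H (s ⟨min ((j : ℕ) + 1) s.length, Nat.lt_succ_of_le (min_le_right _ _)⟩))
      (ofA_invariant _) = s (Fin.succ j) := by
    rw [toA_ofA]
    exact congrArg s (Fin.ext (by simp [min_eq_left (Nat.succ_le_of_lt j.isLt)]))
  have B1 : toA H (ofA H (t' ⟨min (i : ℕ) t'.length, Nat.lt_succ_of_le (min_le_right _ _)⟩))
      (ofA_invariant _) = t' (Fin.castSucc (e j)) := by
    rw [toA_ofA]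
    refine congrArg t' (Fin.ext ?_)
    show min (i : ℕ) s.length = ((e j : Fin t'.length) : ℕ)
    rw [hejv, min_eq_left (le_of_lt i.isLt)]
  have B2 : toA H (ofA H (t' ⟨min ((i : ℕ) + 1) t'.length, Nat.lt_succ_of_le (min_le_right _ _)⟩))
      (ofA_invariant _) = t' (Fin.succ (e j)) := by
    rw [toA_ofA]
    refine congrArg t' (Fin.ext ?_)
    show min ((i : ℕ) + 1) s.length = ((e j : Fin t'.length) : ℕ) + 1
    rw [hejv, min_eq_left (Nat.succ_le_of_lt i.isLt)]
  refine factorHIso_of_iso (ofA_invariant _) (ofA_invariant _) (ofA_invariant _)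
    (ofA_invariant _) ?_ ?_ ?_
  · exact (hchainC.2.2.2 (j : ℕ) j.isLt).1.le
  · exact (hchainC'.2.2.2 (i : ℕ) i.isLt).1.le
  · rw [A1, A2, B1, B2]
    exact he j
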